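/- arXiv:2511.17981 — 6 statements merged into one kernel-verified Lean document; each statement's English description precedes it below -/
import Mathlib

section
/- Let (Ω, P) be a probability space, let ε and θ be independent integrable real-valued random variables, and let μ0 be a real number such that ω ↦ max(μ0 + ε(ω), θ(ω)) is integrable. Then E[max(μ0 + ε, θ)] ≥ E[max(μ0 + ε, E[θ])]. (Non-negativity of the switching value, Theorem 1.) -/
open MeasureTheory ProbabilityTheory

/-- Non-negativity of the switching value (Theorem 1): if `ε` and `θ` are independent
integrable real random variables and `max (μ0 + ε) θ` is integrable, then
`E[max (μ0 + ε) θ] ≥ ∫ ω, max (μ0 + ε ω) (∫ ω', θ ω' ∂P) ∂P`. -/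
theorem switching_value_nonneg
    {Ω : Type*} [MeasurableSpace Ω] (P : Measure Ω) [IsProbabilityMeasure P]
    (ε θ : Ω → ℝ) (μ0 : ℝ) (hindep : IndepFun ε θ P)
    (hε : Integrable ε P) (hθ : Integrable θ P)
    (hmax : Integrable (fun ω => max (μ0 + ε ω) (θ ω)) P) :
    (∫ ω, max (μ0 + ε ω) (θ ω) ∂P) ≥ ∫ ω, max (μ0 + ε ω) (∫ ω', θ ω' ∂P) ∂P := by
  set c : ℝ := ∫ ω', θ ω' ∂P with hc
  set s : ℝ → ℝ := fun x => if μ0 + x ≤ c then 1 else 0 with hs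
  have hsmeas : Measurable s := by
    apply Measurable.ite _ measurable_const measurable_const
    exact measurableSet_le (measurable_const.add measurable_id) measurable_const
  have hidmeas : Measurable (fun y : ℝ => y) := measurable_id
  have hindep' : IndepFun (s ∘ ε) (fun ω => θ ω - c) P := by
    have := hindep.comp hsmeas (measurable_id.sub_const c)
    exact this
  have hg : Integrable (fun ω => max (μ0 + ε ω) c) P :=
    ((integrable_const μ0).add hε).sup (integrable_const c)
  have hsε : Integrable (s ∘ ε) P := by
    refine (integrable_const (1 : ℝ)).mono' ?_ ?_
    · exact hsmeas.comp_aemeasurable hε.aemeasurable |>.aestronglyMeasurable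
    · filter_upwards with ω
      simp only [Function.comp, hs, Real.norm_eq_abs]
      split <;> simp
  have hh : Integrable ((s ∘ ε) * fun ω => θ ω - c) P :=
    hindep'.integrable_mul hsε (hθ.sub (integrable_const c))
  have hpt : ∀ ω, max (μ0 + ε ω) c + s (ε ω) * (θ ω - c) ≤ max (μ0 + ε ω) (θ ω) := by
    intro ω
    by_cases h : μ0 + ε ω ≤ c
    · simp only [hs, if_pos h, one_mul, max_eq_right h]
      linarith [le_max_right (μ0 + ε ω) (θ ω)]
    · simp only [hs, if_neg h, zero_mul, add_zero]
      push_neg at h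
      rw [max_eq_left h.le]
      exact le_max_left _ _
  have key : ∫ ω, (max (μ0 + ε ω) c + s (ε ω) * (θ ω - c)) ∂P
      ≤ ∫ ω, max (μ0 + ε ω) (θ ω) ∂P :=
    integral_mono (hg.add hh) hmax hpt
  have hzero : ∫ ω, s (ε ω) * (θ ω - c) ∂P = 0 := by
    have := hindep'.integral_mul_eq_mul_integral
      (hsmeas.comp_aemeasurable hε.aemeasurable).aestronglyMeasurable
      ((hθ.sub (integrable_const c)).aestronglyMeasurable)
    have h2 : ∫ ω, (θ ω - c) ∂P = 0 := by
      rw [integral_sub hθ (integrable_const c), integral_const]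
      simp [hc]
    have h3 : (∫ ω, s (ε ω) * (θ ω - c) ∂P)
        = integral P ((s ∘ ε) * fun ω => θ ω - c) := rfl
    rw [h3, this, h2, mul_zero]
  rw [ge_iff_le]
  calc ∫ ω, max (μ0 + ε ω) c ∂P
      = ∫ ω, (max (μ0 + ε ω) c + s (ε ω) * (θ ω - c)) ∂P := by
        have h4 : ∫ ω, (max (μ0 + ε ω) c + s (ε ω) * (θ ω - c)) ∂P
            = (∫ ω, max (μ0 + ε ω) c ∂P) + ∫ ω, s (ε ω) * (θ ω - c) ∂P :=
          integral_add hg hh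
        rw [h4, hzero, add_zero]
    _ ≤ ∫ ω, max (μ0 + ε ω) (θ ω) ∂P := key
end

section
/- Let σ > 0 and let μ0, μ1 be real numbers with μ1 < μ0. Then ∫ max(μ0 + x, μ1) d(gaussianReal 0 σ²)(x) − μ0 > 0. (Strict positivity of the catalytic value under non-degenerate Gaussian status-quo uncertainty, Theorem 1.) -/
open MeasureTheory ProbabilityTheory
open scoped ENNReal NNReal Real

lemma gaussian_integrable_id {v : ℝ≥0} (hv : v ≠ 0) :
    Integrable (fun x : ℝ => x) (gaussianReal 0 v) := by
  rw [gaussianReal_of_var_ne_zero _ hv,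
    integrable_withDensity_iff (measurable_gaussianPDF _ _)
      (Filter.Eventually.of_forall fun x => ENNReal.ofReal_lt_top)]
  have hv' : (0 : ℝ) < (v : ℝ) := lt_of_le_of_ne v.coe_nonneg (by exact_mod_cast hv.symm)
  have heq : (fun x : ℝ => x * (gaussianPDF 0 v x).toReal)
      = fun x : ℝ => (√(2 * Real.pi * v))⁻¹ * (x * Real.exp (-(2 * v)⁻¹ * x ^ 2)) := by
    funext x
    rw [gaussianPDF, ENNReal.toReal_ofReal (gaussianPDFReal_nonneg _ _ _), gaussianPDFReal]
    rw [sub_zero]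
    push_cast
    ring_nf
  rw [heq]
  exact (integrable_mul_exp_neg_mul_sq (by positivity)).const_mul _

/-- Strict positivity of the catalytic value under non-degenerate Gaussian
status-quo uncertainty (Theorem 1). -/
theorem catalytic_value_pos_gaussian
    (σ : ℝ) (hσ : 0 < σ) (μ0 μ1 : ℝ) (hlt : μ1 < μ0) :
    0 < (∫ x, max (μ0 + x) μ1 ∂(gaussianReal 0 ⟨σ ^ 2, sq_nonneg σ⟩)) - μ0 := by
  set v : ℝ≥0 := ⟨σ ^ 2, sq_nonneg σ⟩ with hvdef
  have hv : v ≠ 0 := by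
    intro h
    apply_fun NNReal.toReal at h
    simp only [hvdef, NNReal.coe_mk, NNReal.coe_zero] at h
    change σ ^ 2 = 0 at h
    nlinarith
  set γ := gaussianReal 0 v with hγ
  have hprob : IsProbabilityMeasure γ := by infer_instance
  set a : ℝ := μ1 - μ0 with hadef
  have ha : a < 0 := by simp [hadef]; linarith
  -- integrability of max x a
  have hid : Integrable (fun x : ℝ => x) γ := gaussian_integrable_id hv
  have hf : Integrable (fun x : ℝ => max x a) γ := by
    have := hid.sup (integrable_const a)
    simpa [Pi.sup_def] using this
  -- symmetry: γ.map neg = γ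
  have hmap : γ.map (fun x : ℝ => -1 * x) = γ := by
    rw [hγ, gaussianReal_map_const_mul (-1 : ℝ)]
    norm_num
  have hf2 : Integrable (fun x : ℝ => max (-x) a) γ := by
    have : Integrable (fun x : ℝ => max x a) (γ.map (fun x : ℝ => -1 * x)) := by
      rw [hmap]; exact hf
    have := (integrable_map_measure (by rw [hmap]; exact hf.aestronglyMeasurable)
      (measurable_const_mul (-1 : ℝ)).aemeasurable).mp this
    simpa [Function.comp_def] using this
  -- the symmetrized function
  set g : ℝ → ℝ := fun x => max x a + max (-x) a with hgdef
  have hg_nonneg : ∀ x, 0 ≤ g x := by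
    intro x
    have h1 : x ≤ max x a := le_max_left _ _
    have h2 : -x ≤ max (-x) a := le_max_left _ _
    simp only [hgdef]
    linarith
  have hg_int : Integrable g γ := hf.add hf2
  -- equal integrals by symmetry
  have hsym : ∫ x, max x a ∂γ = ∫ x, max (-x) a ∂γ := by
    conv_lhs => rw [← hmap]
    rw [integral_map (measurable_const_mul (-1 : ℝ)).aemeasurable
      (by rw [hmap]; exact hf.aestronglyMeasurable)]
    simp
  -- positivity of ∫ g
  have hpos : 0 < ∫ x, g x ∂γ := by
    rw [integral_pos_iff_support_of_nonneg_ae (Filter.Eventually.of_forall hg_nonneg) hg_int]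
    have hsub : Set.Ioi (-a) ⊆ Function.support g := by
      intro x hx
      simp only [Set.mem_Ioi] at hx
      have hxa : a < x := by linarith
      have h1 : max x a = x := max_eq_left hxa.le
      have h2 : max (-x) a = a := max_eq_right (by linarith)
      simp only [Function.mem_support, hgdef, h1, h2]
      intro h
      linarith [hx]
    have : γ (Set.Ioi (-a)) ≠ 0 := by
      intro h0
      have hac := gaussianReal_absolutelyContinuous' 0 hv
      have : volume (Set.Ioi (-a)) = 0 := hac (by rwa [← hγ])
      simp [Real.volume_Ioi] at this
    calc (0 : ℝ≥0∞) < γ (Set.Ioi (-a)) := pos_iff_ne_zero.mpr this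
      _ ≤ γ (Function.support g) := measure_mono hsub
  have hI : 0 < ∫ x, max x a ∂γ := by
    have : ∫ x, g x ∂γ = (∫ x, max x a ∂γ) + ∫ x, max (-x) a ∂γ := integral_add hf hf2
    rw [this, ← hsym] at hpos
    linarith
  -- rewrite original integrand
  have hrw : ∀ x : ℝ, max (μ0 + x) μ1 = max x a + μ0 := by
    intro x
    simp only [hadef]
    rcases le_total (μ0 + x) μ1 with h | h
    · rw [max_eq_right h, max_eq_right (by linarith)]; ring
    · rw [max_eq_left h, max_eq_left (by linarith)]; ring
  have : ∫ x, max (μ0 + x) μ1 ∂γ = (∫ x, max x a ∂γ) + μ0 := by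
    simp_rw [hrw]
    rw [integral_add hf (integrable_const μ0), integral_const]
    simp
  rw [hγ, hvdef] at this
  rw [this]
  linarith
end

section
/- Fix Δ > 0. For every σ > 0, the function σ ↦ V(σ, Δ) has derivative φ(−Δ/σ) at σ, and this derivative satisfies 0 < φ(−Δ/σ) ≤ 1/√(2π). In particular V(·, Δ) is strictly increasing on (0, ∞) with marginal effect bounded by 1/√(2π). (Proposition 2, parts 1 and 2.) -/
open MeasureTheory

/-- The standard normal density `φ`. -/
noncomputable def stdNormalPDF (x : ℝ) : ℝ :=
  (Real.sqrt (2 * Real.pi))⁻¹ * Real.exp (-x ^ 2 / 2)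

/-- The standard normal CDF `Φ`. -/
noncomputable def stdNormalCDF (x : ℝ) : ℝ :=
  ∫ t in Set.Iic x, stdNormalPDF t

/-- The catalytic value `V(σ, Δ) = -Δ·Φ(-Δ/σ) + σ·φ(-Δ/σ)`. -/
noncomputable def catalyticValue (σ Δ : ℝ) : ℝ :=
  -Δ * stdNormalCDF (-Δ / σ) + σ * stdNormalPDF (-Δ / σ)

lemma continuous_stdNormalPDF : Continuous stdNormalPDF := by
  unfold stdNormalPDF
  fun_prop

lemma integrable_stdNormalPDF : Integrable stdNormalPDF := by
  have h : Integrable fun x : ℝ => Real.exp (-(1/2 : ℝ) * x ^ 2) :=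
    integrable_exp_neg_mul_sq (by norm_num)
  have : stdNormalPDF = fun x => (Real.sqrt (2 * Real.pi))⁻¹ *
      Real.exp (-(1/2 : ℝ) * x ^ 2) := by
    funext x; unfold stdNormalPDF; ring_nf
  rw [this]
  exact h.const_mul _

lemma hasDerivAt_stdNormalCDF (x : ℝ) :
    HasDerivAt stdNormalCDF (stdNormalPDF x) x := by
  have key : ∀ y : ℝ, stdNormalCDF y = stdNormalCDF 0 + ∫ t in (0:ℝ)..y, stdNormalPDF t := by
    intro y
    have h := intervalIntegral.integral_Iic_sub_Iic
      (f := stdNormalPDF) (a := (0:ℝ)) (b := y) (μ := volume)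
      (integrable_stdNormalPDF.integrableOn) (integrable_stdNormalPDF.integrableOn)
    unfold stdNormalCDF
    rw [← h]; ring
  have h : HasDerivAt (fun y => (∫ t in (0:ℝ)..y, stdNormalPDF t)) (stdNormalPDF x) x :=
    intervalIntegral.integral_hasDerivAt_right
      (integrable_stdNormalPDF.intervalIntegrable)
      (continuous_stdNormalPDF.aestronglyMeasurable.stronglyMeasurableAtFilter)
      continuous_stdNormalPDF.continuousAt
  have := (h.const_add (stdNormalCDF 0))
  simpa [← key] using this

lemma hasDerivAt_stdNormalPDF (x : ℝ) :
    HasDerivAt stdNormalPDF (-x * stdNormalPDF x) x := by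
  have h1 : HasDerivAt (fun y : ℝ => -y ^ 2 / 2) (-x) x := by
    have : HasDerivAt (fun y : ℝ => -y ^ 2 / 2) (-(2 * x ^ 1) / 2) x := by
      exact (((hasDerivAt_pow 2 x).neg).div_const 2)
    convert this using 1; ring
  have h2 : HasDerivAt (fun y : ℝ => Real.exp (-y ^ 2 / 2))
      (Real.exp (-x ^ 2 / 2) * (-x)) x := (Real.hasDerivAt_exp _).comp x h1
  have := h2.const_mul ((Real.sqrt (2 * Real.pi))⁻¹)
  unfold stdNormalPDF
  exact this.congr_deriv (by ring)

lemma stdNormalPDF_pos (x : ℝ) : 0 < stdNormalPDF x := by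
  unfold stdNormalPDF
  have : 0 < Real.sqrt (2 * Real.pi) :=
    Real.sqrt_pos.mpr (by positivity)
  positivity

lemma stdNormalPDF_le (x : ℝ) : stdNormalPDF x ≤ 1 / Real.sqrt (2 * Real.pi) := by
  unfold stdNormalPDF
  rw [one_div]
  have h : Real.exp (-x ^ 2 / 2) ≤ 1 := by
    rw [Real.exp_le_one_iff]
    nlinarith [sq_nonneg x]
  have hs : (0:ℝ) ≤ (Real.sqrt (2 * Real.pi))⁻¹ := by positivity
  nlinarith

lemma hasDerivAt_catalyticValue (Δ : ℝ) (σ : ℝ) (hσ : 0 < σ) :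
    HasDerivAt (fun s => catalyticValue s Δ) (stdNormalPDF (-Δ / σ)) σ := by
  have hσ' : σ ≠ 0 := ne_of_gt hσ
  have hu : HasDerivAt (fun s : ℝ => -Δ / s) (Δ / σ ^ 2) σ := by
    have : HasDerivAt (fun s : ℝ => -Δ * s⁻¹) (-Δ * (-(σ ^ 2)⁻¹)) σ :=
      (hasDerivAt_inv hσ').const_mul (-Δ)
    convert this using 1
    field_simp
    ring
  have hΦ : HasDerivAt (fun s : ℝ => stdNormalCDF (-Δ / s))
      (stdNormalPDF (-Δ / σ) * (Δ / σ ^ 2)) σ :=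
    (hasDerivAt_stdNormalCDF (-Δ / σ)).comp σ hu
  have hφ : HasDerivAt (fun s : ℝ => stdNormalPDF (-Δ / s))
      (-(-Δ / σ) * stdNormalPDF (-Δ / σ) * (Δ / σ ^ 2)) σ :=
    (hasDerivAt_stdNormalPDF (-Δ / σ)).comp σ hu
  have h2 : HasDerivAt (fun s : ℝ => s * stdNormalPDF (-Δ / s))
      (1 * stdNormalPDF (-Δ / σ) + σ * (-(-Δ / σ) * stdNormalPDF (-Δ / σ) * (Δ / σ ^ 2))) σ :=
    (hasDerivAt_id σ).mul hφ
  have h1 := (hΦ.const_mul (-Δ)).add h2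
  have : HasDerivAt (fun s => catalyticValue s Δ)
      (-Δ * (stdNormalPDF (-Δ / σ) * (Δ / σ ^ 2)) +
        (1 * stdNormalPDF (-Δ / σ) + σ * (-(-Δ / σ) * stdNormalPDF (-Δ / σ) * (Δ / σ ^ 2)))) σ := by
    simpa [catalyticValue, Pi.add_def] using h1
  convert this using 1
  field_simp
  ring

/-- Proposition 2, parts 1 and 2: for fixed `Δ > 0`, the catalytic value has derivative
`φ(-Δ/σ)` in `σ`, which lies in `(0, 1/√(2π)]`; hence `V(·, Δ)` is strictly increasing
on `(0, ∞)`. -/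
theorem catalyticValue_deriv_sigma (Δ : ℝ) (hΔ : 0 < Δ) :
    (∀ σ : ℝ, 0 < σ →
      HasDerivAt (fun s => catalyticValue s Δ) (stdNormalPDF (-Δ / σ)) σ ∧
      0 < stdNormalPDF (-Δ / σ) ∧
      stdNormalPDF (-Δ / σ) ≤ 1 / Real.sqrt (2 * Real.pi)) ∧
    StrictMonoOn (fun σ => catalyticValue σ Δ) (Set.Ioi 0) := by
  refine ⟨fun σ hσ => ⟨hasDerivAt_catalyticValue Δ σ hσ, stdNormalPDF_pos _, stdNormalPDF_le _⟩, ?_⟩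
  apply StrictMonoOn.mono (s := Set.Ioi 0) ?_ le_rfl
  have : StrictMonoOn (fun σ => catalyticValue σ Δ) (Set.Ioi 0) := by
    apply strictMonoOn_of_deriv_pos (convex_Ioi 0)
    · exact fun x hx =>
        (hasDerivAt_catalyticValue Δ x hx).continuousAt.continuousWithinAt
    · intro x hx
      rw [interior_Ioi] at hx
      rw [(hasDerivAt_catalyticValue Δ x hx).deriv]
      exact stdNormalPDF_pos _
  exact this
end

section
/- Fix σ > 0. For every Δ > 0, the function Δ ↦ φ(−Δ/σ) (which equals the marginal effect ∂V/∂σ of uncertainty on the catalytic value) has derivative −(Δ/σ²)·φ(−Δ/σ) at Δ, and this derivative is strictly negative; equivalently, the marginal catalytic value of uncertainty is strictly increasing in the challenger quality μ1 = μ0 − Δ. (Cross-effect, Proposition 2, part 3.) -/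
open MeasureTheory

/-- Cross-effect (Proposition 2, part 3): for fixed `σ > 0` and `Δ > 0`, the marginal
effect `φ(-Δ/σ)` of uncertainty on the catalytic value has derivative
`-(Δ/σ²)·φ(-Δ/σ) < 0` in `Δ`; equivalently, the marginal catalytic value of
uncertainty is strictly increasing in the challenger quality `μ1 = μ0 - Δ`. -/
theorem catalyticValue_cross_effect (σ : ℝ) (hσ : 0 < σ) :
    ∀ Δ : ℝ, 0 < Δ →
      HasDerivAt (fun d => stdNormalPDF (-d / σ))
        (-(Δ / σ ^ 2) * stdNormalPDF (-Δ / σ)) Δ ∧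
      -(Δ / σ ^ 2) * stdNormalPDF (-Δ / σ) < 0 := by
  intro Δ hΔ
  have hσ' : σ ≠ 0 := ne_of_gt hσ
  have hpdf : 0 < stdNormalPDF (-Δ / σ) := by
    unfold stdNormalPDF
    positivity
  constructor
  · -- inner: d ↦ -(-d/σ)^2/2
    have hg : HasDerivAt (fun d : ℝ => -(-d / σ) ^ 2 / 2) (-(Δ / σ ^ 2)) Δ := by
      have h1 : HasDerivAt (fun d : ℝ => -d / σ) (-1 / σ) Δ := by
        simpa using ((hasDerivAt_id Δ).neg.div_const σ)
      have h2 := (h1.pow 2).neg.div_const 2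
      refine h2.congr_deriv ?_
      simp only [Nat.add_one_sub_one, pow_one, Nat.cast_ofNat]
      field_simp
    have hexp := hg.exp
    have := hexp.const_mul ((Real.sqrt (2 * Real.pi))⁻¹)
    refine this.congr_deriv ?_
    unfold stdNormalPDF
    ring
  · have : 0 < Δ / σ ^ 2 := by positivity
    nlinarith
end

section
/- Let (Ω, P) be a probability space and let X be a real-valued random variable with X ∈ L²(P). Then for every a ∈ ℝ, Var(max(X, a)) ≤ Var(X): truncating the left tail of a random variable weakly decreases its variance. (Variance-reduction step in the proof of Proposition 3.) -/
open MeasureTheory ProbabilityTheory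

lemma variance_le_integral_sub_sq
    {Ω : Type*} [MeasurableSpace Ω] (P : Measure Ω) [IsProbabilityMeasure P]
    (Y : Ω → ℝ) (hY : MemLp Y 2 P) (c : ℝ) :
    variance Y P ≤ ∫ ω, (Y ω - c) ^ 2 ∂P := by
  have hZ : MemLp (fun ω => Y ω - c) 2 P := hY.sub (memLp_const c)
  have hint : ∫ ω, (Y ω - c) ∂P = (∫ ω, Y ω ∂P) - c := by
    rw [integral_sub (hY.integrable one_le_two) (integrable_const c)]
    simp
  have h1 : variance (fun ω => Y ω - c) P = variance Y P := by
    rw [variance_eq_integral hZ.aestronglyMeasurable.aemeasurable,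
      variance_eq_integral hY.aestronglyMeasurable.aemeasurable, hint]
    congr 1
    funext ω
    ring
  calc variance Y P = variance (fun ω => Y ω - c) P := h1.symm
    _ ≤ ∫ ω, (Y ω - c) ^ 2 ∂P := by
        simpa using variance_le_expectation_sq hZ.aestronglyMeasurable

/-- Variance-reduction step in the proof of Proposition 3: truncating the left tail
of a square-integrable random variable weakly decreases its variance:
`Var(max(X, a)) ≤ Var(X)`. -/
theorem variance_max_le
    {Ω : Type*} [MeasurableSpace Ω] (P : Measure Ω) [IsProbabilityMeasure P]
    (X : Ω → ℝ) (hX : MemLp X 2 P) (a : ℝ) :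
    variance (fun ω => max (X ω) a) P ≤ variance X P := by
  set m := ∫ ω, X ω ∂P with hm
  have hY : MemLp (fun ω => max (X ω) a) 2 P := hX.sup (memLp_const a)
  have h1 : variance (fun ω => max (X ω) a) P ≤ ∫ ω, (max (X ω) a - max m a) ^ 2 ∂P :=
    variance_le_integral_sub_sq P _ hY (max m a)
  have h2 : ∫ ω, (max (X ω) a - max m a) ^ 2 ∂P ≤ ∫ ω, (X ω - m) ^ 2 ∂P := by
    apply integral_mono_of_nonneg (ae_of_all _ fun ω => sq_nonneg _)
      ((hX.sub (memLp_const m)).integrable_sq)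
    refine ae_of_all _ fun ω => ?_
    have h := abs_max_sub_max_le_abs (X ω) m a
    calc (max (X ω) a - max m a) ^ 2 = |max (X ω) a - max m a| ^ 2 := (sq_abs _).symm
      _ ≤ |X ω - m| ^ 2 := by gcongr
      _ = (X ω - m) ^ 2 := sq_abs _
  have h3 : ∫ ω, (X ω - m) ^ 2 ∂P = variance X P := by
    rw [variance_eq_integral hX.aestronglyMeasurable.aemeasurable]
  linarith
end

section
/- Let σ > 0 and μ0 ∈ ℝ. Then for every t ∈ ℝ, the function t ↦ ∫ max(μ0 + x, t) d(gaussianReal 0 σ²)(x) has derivative Φ((t − μ0)/σ) at t. In particular, the marginal effect of challenger quality on the option value equals the probability that the challenger beats the status quo. (Derivative ∂V^{IC}/∂θ = Pr(θ > μ0 + ε), used in Proposition 6.) -/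
open MeasureTheory ProbabilityTheory

lemma gaussianPDFReal_zero_one (x : ℝ) :
    gaussianPDFReal 0 1 x = stdNormalPDF x := by
  rw [gaussianPDFReal, stdNormalPDF]
  norm_num

lemma integrable_max_gaussian (σ : ℝ) (hσ : 0 < σ) (μ0 u : ℝ) :
    Integrable (fun x => max (μ0 + x) u) (gaussianReal 0 ⟨σ ^ 2, sq_nonneg σ⟩) := by
  set v : NNReal := ⟨σ ^ 2, sq_nonneg σ⟩ with hv
  have hv0 : v ≠ 0 := by
    simp only [hv, ne_eq, ← NNReal.coe_inj, NNReal.coe_mk, NNReal.coe_zero]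
    exact fun h => (pow_pos hσ 2).ne' (congrArg NNReal.toReal h)
  rw [gaussianReal_of_var_ne_zero _ hv0,
    integrable_withDensity_iff (measurable_gaussianPDF 0 v)
      (Filter.Eventually.of_forall fun _ => ENNReal.ofReal_lt_top)]
  have hpdf : ∀ x, (gaussianPDF 0 v x).toReal = gaussianPDFReal 0 v x := fun x =>
    ENNReal.toReal_ofReal (gaussianPDFReal_nonneg 0 v x)
  simp only [hpdf]
  have hb : (0:ℝ) < (2 * (v:ℝ))⁻¹ := by
    have : (0:ℝ) < (v:ℝ) := by simp only [hv, NNReal.coe_mk]; exact pow_pos hσ 2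
    positivity
  have h1 : Integrable (fun x : ℝ => |x| * gaussianPDFReal 0 v x) := by
    have := (integrable_mul_exp_neg_mul_sq hb).abs
    have h2 := this.const_mul (Real.sqrt (2 * Real.pi * (v:ℝ)))⁻¹
    refine h2.congr (Filter.Eventually.of_forall fun x => ?_)
    simp only [gaussianPDFReal, abs_mul, abs_of_nonneg (Real.exp_nonneg _), sub_zero]
    rw [show -x ^ 2 / (2 * (v:ℝ)) = -(2 * (v:ℝ))⁻¹ * x ^ 2 by
      field_simp]
    ring
  have h2 : Integrable (fun x : ℝ => gaussianPDFReal 0 v x) :=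
    integrable_gaussianPDFReal 0 v
  have hbound : Integrable
      (fun x : ℝ => (|μ0| + |u|) * gaussianPDFReal 0 v x + |x| * gaussianPDFReal 0 v x) :=
    (h2.const_mul _).add h1
  refine hbound.mono' ?_ (Filter.Eventually.of_forall fun x => ?_)
  · exact ((measurable_const.add measurable_id').max measurable_const).aestronglyMeasurable.mul
      (measurable_gaussianPDFReal 0 v).aestronglyMeasurable
  · have hnn := gaussianPDFReal_nonneg 0 v x
    have hmax : |max (μ0 + x) u| ≤ (|μ0| + |u|) + |x| := by
      rcases le_total (μ0 + x) u with h | h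
      · rw [max_eq_right h]
        calc |u| ≤ |μ0| + |u| := le_add_of_nonneg_left (abs_nonneg _)
        _ ≤ (|μ0| + |u|) + |x| := le_add_of_nonneg_right (abs_nonneg _)
      · rw [max_eq_left h]
        calc |μ0 + x| ≤ |μ0| + |x| := abs_add_le _ _
        _ ≤ (|μ0| + |u|) + |x| := by nlinarith [abs_nonneg u]
    calc ‖max (μ0 + x) u * gaussianPDFReal 0 v x‖
        = |max (μ0 + x) u| * gaussianPDFReal 0 v x := by
          rw [norm_mul, Real.norm_eq_abs, Real.norm_eq_abs, abs_of_nonneg hnn]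
      _ ≤ ((|μ0| + |u|) + |x|) * gaussianPDFReal 0 v x := by
          exact mul_le_mul_of_nonneg_right hmax hnn
      _ = (|μ0| + |u|) * gaussianPDFReal 0 v x + |x| * gaussianPDFReal 0 v x := by ring

/-- Marginal effect of challenger quality on the option value (used in
Proposition 6): the map `t ↦ ∫ max (μ0 + x) t dN(0, σ²)` has derivative
`Φ((t - μ0)/σ)` at every `t`, i.e. the probability that the challenger beats the
status quo. -/
theorem deriv_option_value_in_challenger_quality
    (σ : ℝ) (hσ : 0 < σ) (μ0 : ℝ) :
    ∀ t : ℝ,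
      HasDerivAt
        (fun u => ∫ x, max (μ0 + x) u ∂(gaussianReal 0 ⟨σ ^ 2, sq_nonneg σ⟩))
        (stdNormalCDF ((t - μ0) / σ)) t := by
  intro t
  set v : NNReal := ⟨σ ^ 2, sq_nonneg σ⟩ with hv
  have hv0 : v ≠ 0 := by
    simp only [hv, ne_eq, ← NNReal.coe_inj, NNReal.coe_mk, NNReal.coe_zero]
    exact fun h => (pow_pos hσ 2).ne' (congrArg NNReal.toReal h)
  set γ : Measure ℝ := gaussianReal 0 v with hγ
  set F' : ℝ → ℝ := (Set.Iio (t - μ0)).indicator (fun _ => (1:ℝ)) with hF'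
  -- a.e. derivative
  have hnull : γ {x : ℝ | μ0 + x = t} = 0 := by
    have : {x : ℝ | μ0 + x = t} = {t - μ0} := by
      ext x; simp [eq_comm, sub_eq_iff_eq_add, eq_sub_iff_add_eq, add_comm]
    rw [this, gaussianReal_apply_eq_integral 0 hv0]
    rw [show (∫ x in ({t - μ0} : Set ℝ), gaussianPDFReal 0 v x) = 0 by
      rw [Measure.restrict_eq_zero.mpr (by simp)]; simp]
    simp
  have h_diff : ∀ᵐ x ∂γ, HasDerivAt (fun u => max (μ0 + x) u) (F' x) t := by
    rw [ae_iff]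
    refine measure_mono_null (fun x hx => ?_) hnull
    simp only [Set.mem_setOf_eq]
    by_contra hne
    apply hx
    rcases lt_or_gt_of_ne hne with h | h
    · -- μ0 + x < t : locally max = id, derivative 1
      have hF'x : F' x = 1 := by
        rw [hF', Set.indicator_of_mem (by simpa [Set.mem_Iio] using by linarith)]
      rw [hF'x]
      refine (hasDerivAt_id t).congr_of_eventuallyEq ?_
      filter_upwards [Ioi_mem_nhds h] with u hu
      exact max_eq_right (le_of_lt hu)
    · -- μ0 + x > t : locally max = const, derivative 0
      have hF'x : F' x = 0 := by
        rw [hF', Set.indicator_of_notMem (by simp [Set.mem_Iio]; linarith)]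
      rw [hF'x]
      refine (hasDerivAt_const t (μ0 + x)).congr_of_eventuallyEq ?_
      filter_upwards [Iio_mem_nhds h] with u hu
      exact max_eq_left (le_of_lt hu)
  have h_lip : ∀ᵐ x ∂γ, LipschitzOnWith (Real.nnabs ((fun _ : ℝ => (1:ℝ)) x))
      (fun u => max (μ0 + x) u) (Metric.ball t 1) := by
    refine Filter.Eventually.of_forall fun x => ?_
    have : LipschitzWith 1 (fun u : ℝ => max (μ0 + x) u) := by
      have := (LipschitzWith.const' (μ0 + x) (K := 1)).max (LipschitzWith.id (α := ℝ))
      simpa using this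
    have h1 : Real.nnabs (1:ℝ) = 1 := by simp
    rw [h1]
    exact LipschitzWith.lipschitzOnWith this
  have hF'_meas : AEStronglyMeasurable F' γ :=
    ((measurable_const (a := (1:ℝ))).indicator measurableSet_Iio).aestronglyMeasurable
  have hF_meas : ∀ᶠ u in nhds t, AEStronglyMeasurable (fun x => max (μ0 + x) u) γ :=
    Filter.Eventually.of_forall fun u =>
      ((measurable_const.add measurable_id').max measurable_const).aestronglyMeasurable
  have hF_int : Integrable (fun x => max (μ0 + x) t) γ := integrable_max_gaussian σ hσ μ0 t
  have hbound_int : Integrable (fun _ : ℝ => (1:ℝ)) γ := integrable_const 1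
  have key := hasDerivAt_integral_of_dominated_loc_of_lip (F := fun u x => max (μ0 + x) u)
    (bound := fun _ => (1:ℝ)) (Metric.ball_mem_nhds t one_pos) hF_meas hF_int hF'_meas h_lip hbound_int h_diff
  have hderiv := key.2
  -- compute ∫ F' dγ
  have hint : ∫ x, F' x ∂γ = (γ (Set.Iio (t - μ0))).toReal := by
    rw [hF']
    exact MeasureTheory.integral_indicator_one measurableSet_Iio
  -- γ (Iio c) via standard normal
  have hmap : (gaussianReal 0 1).map (σ * ·) = γ := by
    rw [hγ, hv]
    have := gaussianReal_map_const_mul (μ := 0) (v := 1) σ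
    rw [this]
    congr 1
    · simp
    · ext; simp; rfl
  have hpre : (fun x : ℝ => σ * x) ⁻¹' Set.Iio (t - μ0) = Set.Iio ((t - μ0) / σ) := by
    ext x
    simp only [Set.mem_preimage, Set.mem_Iio]
    rw [lt_div_iff₀ hσ, mul_comm]
  have hγIio : γ (Set.Iio (t - μ0))
      = ENNReal.ofReal (∫ x in Set.Iio ((t - μ0) / σ), gaussianPDFReal 0 1 x) := by
    rw [← hmap, Measure.map_apply (measurable_const_mul σ) measurableSet_Iio, hpre]
    exact gaussianReal_apply_eq_integral 0 one_ne_zero _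
  have hstd : ∫ x in Set.Iio ((t - μ0) / σ), gaussianPDFReal 0 1 x
      = stdNormalCDF ((t - μ0) / σ) := by
    rw [stdNormalCDF, integral_Iic_eq_integral_Iio]
    exact setIntegral_congr_fun measurableSet_Iio fun x _ => gaussianPDFReal_zero_one x
  have hnonneg : 0 ≤ ∫ x in Set.Iio ((t - μ0) / σ), gaussianPDFReal 0 1 x :=
    setIntegral_nonneg measurableSet_Iio fun x _ => gaussianPDFReal_nonneg 0 1 x
  have hfinal : ∫ x, F' x ∂γ = stdNormalCDF ((t - μ0) / σ) := by
    rw [hint, hγIio, ENNReal.toReal_ofReal hnonneg, hstd]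
  rw [← hfinal]
  exact hderiv
end
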